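/- Let a < b and c < d be real numbers, Δ = [a,b] × [c,d], let f : Δ → ℝ be (L₁, L₂)-Lipschitz on Δ with L₁, L₂ > 0, and define H : [0,1] × [0,1] → ℝ by H(t,s) = (1/((b-a)(d-c))) ∫_a^b ∫_c^d f(t·x + (1-t)·(a+b)/2, s·y + (1-s)·(c+d)/2) dy dx. Then for all t, s ∈ [0,1], |H(t,s) − (1/((b-a)(d-c))) ∫_a^b ∫_c^d f(x,y) dy dx| ≤ (L₁·(1-t)/4)·(b-a) + (L₂·(1-s)/4)·(d-c). -/

import Mathlib

open MeasureTheory Set intervalIntegral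

lemma my_abs_int (a b : ℝ) (hab : a ≤ b) :
    ∫ x in a..b, |x - (a + b) / 2| = (b - a) ^ 2 / 4 := by
  set m := (a + b) / 2 with hm
  have ham : a ≤ m := by rw [hm]; linarith
  have hmb : m ≤ b := by rw [hm]; linarith
  have hcont : Continuous fun x : ℝ => |x - m| :=
    continuous_abs.comp (continuous_id.sub continuous_const)
  rw [← intervalIntegral.integral_add_adjacent_intervals
    (hcont.intervalIntegrable a m) (hcont.intervalIntegrable m b)]
  have e1 : (∫ x in a..m, |x - m|) = ∫ x in a..m, (m - x) := by
    apply integral_congr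
    intro x hx
    rw [uIcc_of_le ham] at hx
    show |x - m| = m - x
    rw [abs_of_nonpos (by linarith [hx.2])]; ring
  have e2 : (∫ x in m..b, |x - m|) = ∫ x in m..b, (x - m) := by
    apply integral_congr
    intro x hx
    rw [uIcc_of_le hmb] at hx
    show |x - m| = x - m
    rw [abs_of_nonneg (by linarith [hx.1])]
  rw [e1, e2,
    integral_sub intervalIntegrable_const intervalIntegrable_id,
    integral_sub intervalIntegrable_id intervalIntegrable_const]
  simp [integral_id, hm]
  ring

lemma contOn_of_lip {g : ℝ → ℝ} {L : ℝ} {s : Set ℝ}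
    (h : ∀ x ∈ s, ∀ y ∈ s, |g x - g y| ≤ L * |x - y|) : ContinuousOn g s := by
  apply LipschitzOnWith.continuousOn (K := Real.toNNReal L)
  rw [lipschitzOnWith_iff_dist_le_mul]
  intro x hx y hy
  rw [Real.dist_eq, Real.dist_eq]
  calc |g x - g y| ≤ L * |x - y| := h x hx y hy
    _ ≤ Real.toNNReal L * |x - y| :=
      mul_le_mul_of_nonneg_right (Real.le_coe_toNNReal L) (abs_nonneg _)

/-- Theorem 7(ii), inequality (3.2): for the mapping
`H(t,s) = (1/((b-a)(d-c))) ∫_a^b ∫_c^d f(tx+(1-t)(a+b)/2, sy+(1-s)(c+d)/2) dy dx`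
associated with an `(L₁, L₂)`-Lipschitz function `f` on `[a,b] × [c,d]`,
`|H(t,s) − (1/((b-a)(d-c))) ∫∫ f| ≤ (L₁(1-t)/4)(b-a) + (L₂(1-s)/4)(d-c)`
for `t,s ∈ [0,1]`. -/
theorem mapping_H_integral_bound
    (a b c d L₁ L₂ : ℝ) (hab : a < b) (hcd : c < d) (hL₁ : 0 < L₁) (hL₂ : 0 < L₂)
    (f : ℝ → ℝ → ℝ)
    (hf : ∀ t₁ ∈ Icc a b, ∀ t₂ ∈ Icc a b, ∀ s₁ ∈ Icc c d, ∀ s₂ ∈ Icc c d,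
      |f t₁ s₁ - f t₂ s₂| ≤ L₁ * |t₁ - t₂| + L₂ * |s₁ - s₂|)
    (H : ℝ → ℝ → ℝ)
    (hH : ∀ t s, H t s = (1 / ((b - a) * (d - c))) *
      ∫ x in a..b, ∫ y in c..d,
        f (t * x + (1 - t) * ((a + b) / 2)) (s * y + (1 - s) * ((c + d) / 2))) :
    ∀ t ∈ Icc (0:ℝ) 1, ∀ s ∈ Icc (0:ℝ) 1,
      |H t s - (1 / ((b - a) * (d - c))) * ∫ x in a..b, ∫ y in c..d, f x y| ≤
        (L₁ * (1 - t) / 4) * (b - a) + (L₂ * (1 - s) / 4) * (d - c) := by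
  intro t ht s hs
  have hφ : ∀ x ∈ Icc a b, t * x + (1 - t) * ((a + b) / 2) ∈ Icc a b := by
    intro x hx
    constructor <;> nlinarith [hx.1, hx.2, ht.1, ht.2]
  have hψ : ∀ y ∈ Icc c d, s * y + (1 - s) * ((c + d) / 2) ∈ Icc c d := by
    intro y hy
    constructor <;> nlinarith [hy.1, hy.2, hs.1, hs.2]
  -- inner integrability
  have hFinner : ∀ u ∈ Icc a b,
      IntervalIntegrable (fun y => f u (s * y + (1 - s) * ((c + d) / 2))) volume c d := by
    intro u hu
    apply ContinuousOn.intervalIntegrable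
    rw [uIcc_of_le hcd.le]
    apply contOn_of_lip (L := L₂ * s)
    intro y₁ hy₁ y₂ hy₂
    calc |f u (s * y₁ + (1 - s) * ((c + d) / 2)) - f u (s * y₂ + (1 - s) * ((c + d) / 2))|
        ≤ L₁ * |u - u| + L₂ * |(s * y₁ + (1 - s) * ((c + d) / 2)) - (s * y₂ + (1 - s) * ((c + d) / 2))| :=
          hf u hu u hu _ (hψ y₁ hy₁) _ (hψ y₂ hy₂)
      _ = L₂ * s * |y₁ - y₂| := by
          rw [sub_self, abs_zero, mul_zero, zero_add]
          rw [show (s * y₁ + (1 - s) * ((c + d) / 2)) - (s * y₂ + (1 - s) * ((c + d) / 2))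
              = s * (y₁ - y₂) by ring, abs_mul, abs_of_nonneg hs.1]
          ring
  have hGinner : ∀ x ∈ Icc a b, IntervalIntegrable (fun y => f x y) volume c d := by
    intro x hx
    apply ContinuousOn.intervalIntegrable
    rw [uIcc_of_le hcd.le]
    apply contOn_of_lip (L := L₂)
    intro y₁ hy₁ y₂ hy₂
    calc |f x y₁ - f x y₂| ≤ L₁ * |x - x| + L₂ * |y₁ - y₂| := hf x hx x hx _ hy₁ _ hy₂
      _ = L₂ * |y₁ - y₂| := by rw [sub_self, abs_zero, mul_zero, zero_add]
  -- pointwise (in x) bound on the difference of inner integrals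
  have key : ∀ x ∈ Icc a b,
      |(∫ y in c..d, f (t * x + (1 - t) * ((a + b) / 2)) (s * y + (1 - s) * ((c + d) / 2)))
        - ∫ y in c..d, f x y|
      ≤ L₁ * (1 - t) * (d - c) * |x - (a + b) / 2| + L₂ * (1 - s) * ((d - c) ^ 2 / 4) := by
    intro x hx
    have hx' := hφ x hx
    rw [← integral_sub (hFinner _ hx') (hGinner _ hx)]
    have hBcont : Continuous fun y : ℝ =>
        L₁ * (1 - t) * |x - (a + b) / 2| + L₂ * (1 - s) * |y - (c + d) / 2| := by
      continuity
    have hb : IntervalIntegrable (fun y : ℝ =>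
        L₁ * (1 - t) * |x - (a + b) / 2| + L₂ * (1 - s) * |y - (c + d) / 2|) volume c d :=
      hBcont.intervalIntegrable c d
    calc |∫ y in c..d, (f (t * x + (1 - t) * ((a + b) / 2)) (s * y + (1 - s) * ((c + d) / 2)) - f x y)|
        ≤ |∫ y in c..d, (L₁ * (1 - t) * |x - (a + b) / 2| + L₂ * (1 - s) * |y - (c + d) / 2|)| := by
          rw [← Real.norm_eq_abs (∫ y in c..d,
            (f (t * x + (1 - t) * ((a + b) / 2)) (s * y + (1 - s) * ((c + d) / 2)) - f x y))]
          apply norm_integral_le_abs_of_norm_le _ hb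
          filter_upwards [ae_restrict_mem measurableSet_uIoc] with y hy
          rw [uIoc_of_le hcd.le] at hy
          have hy' : y ∈ Icc c d := Ioc_subset_Icc_self hy
          rw [Real.norm_eq_abs]
          calc |f (t * x + (1 - t) * ((a + b) / 2)) (s * y + (1 - s) * ((c + d) / 2)) - f x y|
              ≤ L₁ * |(t * x + (1 - t) * ((a + b) / 2)) - x| + L₂ * |(s * y + (1 - s) * ((c + d) / 2)) - y| :=
                hf _ hx' _ hx _ (hψ y hy') _ hy'
            _ = L₁ * (1 - t) * |x - (a + b) / 2| + L₂ * (1 - s) * |y - (c + d) / 2| := by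
                rw [show (t * x + (1 - t) * ((a + b) / 2)) - x = (1 - t) * ((a + b) / 2 - x) by ring,
                  show (s * y + (1 - s) * ((c + d) / 2)) - y = (1 - s) * ((c + d) / 2 - y) by ring,
                  abs_mul, abs_mul, abs_of_nonneg (by linarith [ht.2] : (0:ℝ) ≤ 1 - t),
                  abs_of_nonneg (by linarith [hs.2] : (0:ℝ) ≤ 1 - s),
                  abs_sub_comm ((a + b) / 2) x, abs_sub_comm ((c + d) / 2) y]
                ring
      _ = L₁ * (1 - t) * (d - c) * |x - (a + b) / 2| + L₂ * (1 - s) * ((d - c) ^ 2 / 4) := by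
          have habs : IntervalIntegrable
              (fun y : ℝ => L₂ * (1 - s) * |y - (c + d) / 2|) volume c d :=
            (continuous_const.mul
              (continuous_abs.comp (continuous_id.sub continuous_const))).intervalIntegrable c d
          rw [_root_.intervalIntegral.integral_add intervalIntegrable_const habs,
            _root_.intervalIntegral.integral_const,
            _root_.intervalIntegral.integral_const_mul, my_abs_int c d hcd.le]
          have h1 : (0:ℝ) ≤ L₁ * (1 - t) * |x - (a + b) / 2| :=
            mul_nonneg (mul_nonneg hL₁.le (by linarith [ht.2])) (abs_nonneg _)
          have h2 : (0:ℝ) ≤ L₂ * (1 - s) * ((d - c) ^ 2 / 4) :=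
            mul_nonneg (mul_nonneg hL₂.le (by linarith [hs.2])) (by positivity)
          have h3 : (0:ℝ) ≤ (d - c) * (L₁ * (1 - t) * |x - (a + b) / 2|) :=
            mul_nonneg (by linarith) h1
          rw [smul_eq_mul, abs_of_nonneg (by linarith)]
          ring
  -- outer integrability
  have hFint : IntervalIntegrable (fun x => ∫ y in c..d,
      f (t * x + (1 - t) * ((a + b) / 2)) (s * y + (1 - s) * ((c + d) / 2))) volume a b := by
    apply ContinuousOn.intervalIntegrable
    rw [uIcc_of_le hab.le]
    apply contOn_of_lip (L := L₁ * t * (d - c))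
    intro x₁ hx₁ x₂ hx₂
    rw [← integral_sub (hFinner _ (hφ x₁ hx₁)) (hFinner _ (hφ x₂ hx₂)),
      ← Real.norm_eq_abs]
    calc ‖∫ y in c..d,
          (f (t * x₁ + (1 - t) * ((a + b) / 2)) (s * y + (1 - s) * ((c + d) / 2))
            - f (t * x₂ + (1 - t) * ((a + b) / 2)) (s * y + (1 - s) * ((c + d) / 2)))‖
        ≤ (L₁ * t * |x₁ - x₂|) * |d - c| := by
          apply _root_.intervalIntegral.norm_integral_le_of_norm_le_const
          intro y hy
          rw [uIoc_of_le hcd.le] at hy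
          have hy' : y ∈ Icc c d := Ioc_subset_Icc_self hy
          rw [Real.norm_eq_abs]
          calc |f (t * x₁ + (1 - t) * ((a + b) / 2)) (s * y + (1 - s) * ((c + d) / 2))
              - f (t * x₂ + (1 - t) * ((a + b) / 2)) (s * y + (1 - s) * ((c + d) / 2))|
              ≤ L₁ * |(t * x₁ + (1 - t) * ((a + b) / 2)) - (t * x₂ + (1 - t) * ((a + b) / 2))|
                + L₂ * |(s * y + (1 - s) * ((c + d) / 2)) - (s * y + (1 - s) * ((c + d) / 2))| :=
                hf _ (hφ x₁ hx₁) _ (hφ x₂ hx₂) _ (hψ y hy') _ (hψ y hy')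
            _ = L₁ * t * |x₁ - x₂| := by
                rw [sub_self, abs_zero, mul_zero, add_zero,
                  show (t * x₁ + (1 - t) * ((a + b) / 2)) - (t * x₂ + (1 - t) * ((a + b) / 2))
                    = t * (x₁ - x₂) by ring, abs_mul, abs_of_nonneg ht.1]
                ring
      _ = L₁ * t * (d - c) * |x₁ - x₂| := by
          rw [abs_of_nonneg (by linarith : (0:ℝ) ≤ d - c)]; ring
  have hGint : IntervalIntegrable (fun x => ∫ y in c..d, f x y) volume a b := by
    apply ContinuousOn.intervalIntegrable
    rw [uIcc_of_le hab.le]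
    apply contOn_of_lip (L := L₁ * (d - c))
    intro x₁ hx₁ x₂ hx₂
    rw [← integral_sub (hGinner _ hx₁) (hGinner _ hx₂), ← Real.norm_eq_abs]
    calc ‖∫ y in c..d, (f x₁ y - f x₂ y)‖ ≤ (L₁ * |x₁ - x₂|) * |d - c| := by
          apply _root_.intervalIntegral.norm_integral_le_of_norm_le_const
          intro y hy
          rw [uIoc_of_le hcd.le] at hy
          have hy' : y ∈ Icc c d := Ioc_subset_Icc_self hy
          rw [Real.norm_eq_abs]
          calc |f x₁ y - f x₂ y| ≤ L₁ * |x₁ - x₂| + L₂ * |y - y| := hf _ hx₁ _ hx₂ _ hy' _ hy'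
            _ = L₁ * |x₁ - x₂| := by rw [sub_self, abs_zero, mul_zero, add_zero]
      _ = L₁ * (d - c) * |x₁ - x₂| := by
          rw [abs_of_nonneg (by linarith : (0:ℝ) ≤ d - c)]; ring
  -- final computation
  have hD : (0:ℝ) < (b - a) * (d - c) := mul_pos (by linarith) (by linarith)
  rw [hH t s, ← mul_sub, ← integral_sub hFint hGint, abs_mul,
    abs_of_nonneg (by positivity : (0:ℝ) ≤ 1 / ((b - a) * (d - c)))]
  have hBint : IntervalIntegrable (fun x : ℝ =>
      L₁ * (1 - t) * (d - c) * |x - (a + b) / 2| + L₂ * (1 - s) * ((d - c) ^ 2 / 4)) volume a b :=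
    ((continuous_const.mul
      (continuous_abs.comp (continuous_id.sub continuous_const))).add
      continuous_const).intervalIntegrable a b
  have habs2 : IntervalIntegrable (fun x : ℝ =>
      L₁ * (1 - t) * (d - c) * |x - (a + b) / 2|) volume a b :=
    (continuous_const.mul
      (continuous_abs.comp (continuous_id.sub continuous_const))).intervalIntegrable a b
  have hBval : (∫ x in a..b,
      (L₁ * (1 - t) * (d - c) * |x - (a + b) / 2| + L₂ * (1 - s) * ((d - c) ^ 2 / 4)))
      = L₁ * (1 - t) * (d - c) * ((b - a) ^ 2 / 4) + L₂ * (1 - s) * ((d - c) ^ 2 / 4) * (b - a) := by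
    rw [_root_.intervalIntegral.integral_add habs2 intervalIntegrable_const,
      _root_.intervalIntegral.integral_const,
      _root_.intervalIntegral.integral_const_mul, my_abs_int a b hab.le, smul_eq_mul]
    ring
  have hmain : |∫ x in a..b,
      ((∫ y in c..d, f (t * x + (1 - t) * ((a + b) / 2)) (s * y + (1 - s) * ((c + d) / 2)))
        - ∫ y in c..d, f x y)|
      ≤ L₁ * (1 - t) * (d - c) * ((b - a) ^ 2 / 4) + L₂ * (1 - s) * ((d - c) ^ 2 / 4) * (b - a) := by
    rw [← Real.norm_eq_abs]
    calc ‖∫ x in a..b,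
        ((∫ y in c..d, f (t * x + (1 - t) * ((a + b) / 2)) (s * y + (1 - s) * ((c + d) / 2)))
          - ∫ y in c..d, f x y)‖
        ≤ |∫ x in a..b,
            (L₁ * (1 - t) * (d - c) * |x - (a + b) / 2| + L₂ * (1 - s) * ((d - c) ^ 2 / 4))| := by
          apply norm_integral_le_abs_of_norm_le _ hBint
          filter_upwards [ae_restrict_mem measurableSet_uIoc] with x hxm
          rw [uIoc_of_le hab.le] at hxm
          rw [Real.norm_eq_abs]
          exact key x (Ioc_subset_Icc_self hxm)
      _ = _ := by
          rw [hBval, abs_of_nonneg]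
          have h1 : (0:ℝ) ≤ L₁ * (1 - t) * (d - c) * ((b - a) ^ 2 / 4) :=
            mul_nonneg (mul_nonneg (mul_nonneg hL₁.le (by linarith [ht.2])) (by linarith))
              (by positivity)
          have h2 : (0:ℝ) ≤ L₂ * (1 - s) * ((d - c) ^ 2 / 4) * (b - a) :=
            mul_nonneg (mul_nonneg (mul_nonneg hL₂.le (by linarith [hs.2])) (by positivity))
              (by linarith)
          linarith
  calc 1 / ((b - a) * (d - c)) * |∫ x in a..b,
        ((∫ y in c..d, f (t * x + (1 - t) * ((a + b) / 2)) (s * y + (1 - s) * ((c + d) / 2)))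
          - ∫ y in c..d, f x y)|
      ≤ 1 / ((b - a) * (d - c)) *
        (L₁ * (1 - t) * (d - c) * ((b - a) ^ 2 / 4) + L₂ * (1 - s) * ((d - c) ^ 2 / 4) * (b - a)) :=
        mul_le_mul_of_nonneg_left hmain (by positivity)
    _ = (L₁ * (1 - t) / 4) * (b - a) + (L₂ * (1 - s) / 4) * (d - c) := by
        field_simp [(sub_pos.mpr hab).ne', (sub_pos.mpr hcd).ne']
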